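/- Let f be a positively quadratic homogeneous (f(kx) = k²f(x) for k ≥ 0), continuous, coercive convex function on a Banach space X. Then f is strictly convex if and only if for every r > 0 the sublevel set B_r = {x : f(x) ≤ r} is a strictly convex body. -/

import Mathlib

open Set Filter Metric Topology

/-- A positively quadratic homogeneous continuous coercive convex
function `f` on a Banach space `X` is strictly convex iff for every `r > 0` the sublevel
set `{x | f x ≤ r}` is a strictly convex body. -/
theorem strictly_convex_iff_sublevels_strictly_convex
    {X : Type*} [NormedAddCommGroup X] [NormedSpace ℝ X] [CompleteSpace X]
    (f : X → ℝ) (hconv : ConvexOn ℝ univ f) (hcont : Continuous f)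
    (hcoercive : Tendsto f (Bornology.cobounded X) atTop)
    (hhom : ∀ k : ℝ, 0 ≤ k → ∀ x, f (k • x) = k ^ 2 * f x) :
    StrictConvexOn ℝ univ f ↔
      ∀ r : ℝ, 0 < r →
        Bornology.IsBounded {x | f x ≤ r} ∧ IsClosed {x | f x ≤ r} ∧
          Convex ℝ {x | f x ≤ r} ∧ (interior {x | f x ≤ r}).Nonempty ∧
          ∀ x ∈ frontier {x | f x ≤ r}, x ∈ Set.extremePoints ℝ {x | f x ≤ r} := by
  -- `f 0 = 0`
  have hf0 : f 0 = 0 := by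
    have h := hhom 0 le_rfl 0
    simpa using h
  -- sublevel sets are bounded
  have hbdd : ∀ r : ℝ, Bornology.IsBounded {x | f x ≤ r} := by
    intro r
    have h : {x : X | r + 1 ≤ f x} ∈ Bornology.cobounded X :=
      hcoercive.eventually_ge_atTop (r + 1)
    have h2 : Bornology.IsBounded {x : X | r + 1 ≤ f x}ᶜ := by
      rw [Bornology.isBounded_def, compl_compl]; exact h
    exact h2.subset (fun x hx => by
      simp only [mem_compl_iff, mem_setOf_eq, not_le]
      exact lt_of_le_of_lt hx (by linarith))
  -- positivity off zero
  have hpos : ∀ x : X, x ≠ 0 → 0 < f x := by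
    intro x hx
    by_contra hle
    push_neg at hle
    obtain ⟨C, hC⟩ := (hbdd 0).subset_ball 0
    set k : ℝ := (|C| + 1) / ‖x‖ with hk
    have hxnorm : 0 < ‖x‖ := norm_pos_iff.2 hx
    have hk0 : 0 ≤ k := div_nonneg (by positivity) hxnorm.le
    have hmem : k • x ∈ {y : X | f y ≤ 0} := by
      simp only [mem_setOf_eq, hhom k hk0 x]
      exact mul_nonpos_of_nonneg_of_nonpos (by positivity) hle
    have hball := hC hmem
    rw [mem_ball_zero_iff, norm_smul, Real.norm_eq_abs, abs_of_nonneg hk0, hk,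
      div_mul_cancel₀ _ hxnorm.ne'] at hball
    linarith [le_abs_self C]
  -- points at level `r > 0` are on the frontier
  have hfr2 : ∀ r : ℝ, 0 < r → ∀ z : X, f z = r → z ∈ frontier {x | f x ≤ r} := by
    intro r hr z hz
    rw [frontier_eq_closure_inter_closure]
    constructor
    · exact subset_closure (by simp [mem_setOf_eq, hz])
    · -- approximate by `(1 + 1/(n+1)) • z` which lies outside
      have hz0 : z ≠ 0 := by
        intro h; rw [h, hf0] at hz; exact hr.ne' hz.symm
      have htend : Tendsto (fun n : ℕ => (1 + 1 / (n + 1 : ℝ)) • z) atTop (𝓝 z) := by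
        have h1 : Tendsto (fun n : ℕ => (1 + 1 / (n + 1 : ℝ))) atTop (𝓝 1) := by
          have : Tendsto (fun n : ℕ => 1 / ((n : ℝ) + 1)) atTop (𝓝 0) :=
            tendsto_one_div_add_atTop_nhds_zero_nat
          have := tendsto_const_nhds (x := (1:ℝ)) (f := atTop (α := ℕ)) |>.add this
          simpa using this
        have := h1.smul (tendsto_const_nhds (x := z) (f := atTop (α := ℕ)))
        simpa using this
      refine mem_closure_of_tendsto htend (Eventually.of_forall fun n => ?_)
      simp only [mem_compl_iff, mem_setOf_eq, not_le]
      have hn : (0:ℝ) < 1 / (n + 1 : ℝ) := by positivity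
      rw [hhom _ (by linarith) z, hz]
      nlinarith [mul_pos hn hr, mul_pos (mul_pos hn hn) hr]
  -- frontier points are at level `r`
  have hfr1 : ∀ r : ℝ, 0 < r → ∀ x : X, x ∈ frontier {x | f x ≤ r} → f x = r := by
    intro r hr x hx
    have hcl : IsClosed {x : X | f x ≤ r} := isClosed_le hcont continuous_const
    have hle : f x ≤ r := hcl.frontier_subset hx
    have hni : x ∉ interior {x : X | f x ≤ r} := hx.2
    by_contra hne
    have hlt : f x < r := lt_of_le_of_ne hle hne
    have hopen : IsOpen {y : X | f y < r} := isOpen_lt hcont continuous_const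
    have hsub : {y : X | f y < r} ⊆ interior {x : X | f x ≤ r} :=
      hopen.subset_interior_iff.2 (fun y (hy : f y < r) => le_of_lt hy)
    exact hni (hsub hlt)
  constructor
  · -- forward direction
    intro hsc r hr
    refine ⟨hbdd r, isClosed_le hcont continuous_const, ?_, ⟨0, ?_⟩, ?_⟩
    · have := hconv.convex_le r
      simpa using this
    · have hopen : IsOpen {y : X | f y < r} := isOpen_lt hcont continuous_const
      have hsub : {y : X | f y < r} ⊆ interior {x : X | f x ≤ r} :=
        hopen.subset_interior_iff.2 (fun y (hy : f y < r) => le_of_lt hy)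
      exact hsub (show f 0 < r by rw [hf0]; exact hr)
    · intro x hx
      have hxr : f x = r := hfr1 r hr x hx
      refine mem_extremePoints.2 ⟨by simp [mem_setOf_eq, hxr], ?_⟩
      rintro y hy z hz ⟨a, b, ha, hb, hab, habx⟩
      by_cases hyz : y = z
      · subst hyz
        have : x = y := by
          rw [← habx, ← add_smul, hab, one_smul]
        exact ⟨this.symm, this.symm⟩
      · exfalso
        have := hsc.2 (mem_univ y) (mem_univ z) hyz ha hb hab
        rw [habx] at this
        simp only [smul_eq_mul] at this
        have hy' : f y ≤ r := hy
        have hz' : f z ≤ r := hz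
        nlinarith
  · -- backward direction
    intro h
    refine ⟨convex_univ, ?_⟩
    intro x _ y _ hxy a b ha hb hab
    simp only [smul_eq_mul]
    by_cases hx0 : x = 0
    · subst hx0
      have hy0 : y ≠ 0 := fun h => hxy h.symm
      have hfy : 0 < f y := hpos y hy0
      rw [smul_zero, zero_add, hhom b hb.le y, hf0]
      nlinarith [mul_pos (mul_pos ha hb) hfy]
    by_cases hy0 : y = 0
    · subst hy0
      have hfx : 0 < f x := hpos x hx0
      rw [smul_zero, add_zero, hhom a ha.le x, hf0]
      nlinarith [mul_pos (mul_pos ha hb) hfx]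
    have hfx : 0 < f x := hpos x hx0
    have hfy : 0 < f y := hpos y hy0
    have hle := hconv.2 (mem_univ x) (mem_univ y) ha.le hb.le hab
    simp only [smul_eq_mul] at hle
    by_cases hpq : f x = f y
    · -- equal levels: use extreme point property
      rcases lt_or_eq_of_le hle with hlt | heq
      · exact hlt
      exfalso
      set r := f x with hrdef
      have hz : f (a • x + b • y) = r := by
        rw [heq, ← hpq]; linear_combination r * hab
      have hzfr : a • x + b • y ∈ frontier {x | f x ≤ r} := hfr2 r hfx _ hz
      have hext := (h r hfx).2.2.2.2 _ hzfr
      rw [mem_extremePoints] at hext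
      have hxm : x ∈ {x : X | f x ≤ r} := le_refl r
      have hym : y ∈ {x : X | f x ≤ r} := le_of_eq hpq.symm
      obtain ⟨hx1, hy1⟩ := hext.2 x hxm y hym ⟨a, b, ha, hb, hab, rfl⟩
      exact hxy (hx1.trans hy1.symm)
    · -- different levels: homogeneity argument
      set α : ℝ := Real.sqrt (f x) with hα
      set β : ℝ := Real.sqrt (f y) with hβ
      have hα0 : 0 < α := Real.sqrt_pos.2 hfx
      have hβ0 : 0 < β := Real.sqrt_pos.2 hfy
      have hα2 : α ^ 2 = f x := Real.sq_sqrt hfx.le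
      have hβ2 : β ^ 2 = f y := Real.sq_sqrt hfy.le
      have hαβ : α ≠ β := fun h => hpq (by rw [← hα2, ← hβ2, h])
      set s : ℝ := a * α + b * β with hs
      have hs0 : 0 < s := by positivity
      set u : X := α⁻¹ • x with hu
      set v : X := β⁻¹ • y with hv
      have hfu : f u = 1 := by
        rw [hu, hhom α⁻¹ (by positivity) x, ← hα2]
        field_simp
      have hfv : f v = 1 := by
        rw [hv, hhom β⁻¹ (by positivity) y, ← hβ2]
        field_simp
      have hlam : a * α / s + b * β / s = 1 := by field_simp; exact hs.symm
      have hcvx := hconv.2 (mem_univ u) (mem_univ v)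
        (show (0:ℝ) ≤ a * α / s by positivity)
        (show (0:ℝ) ≤ b * β / s by positivity) hlam
      simp only [smul_eq_mul, hfu, hfv, mul_one] at hcvx
      rw [hlam] at hcvx
      have hrepr : a • x + b • y = s • ((a * α / s) • u + (b * β / s) • v) := by
        rw [hu, hv, smul_add, smul_smul, smul_smul, smul_smul, smul_smul]
        have e1 : s * (a * α / s) * α⁻¹ = a := by field_simp
        have e2 : s * (b * β / s) * β⁻¹ = b := by field_simp
        rw [e1, e2]
      have hval : f (a • x + b • y) ≤ s ^ 2 := by
        rw [hrepr, hhom s hs0.le]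
        calc s ^ 2 * f ((a * α / s) • u + (b * β / s) • v) ≤ s ^ 2 * 1 := by
              exact mul_le_mul_of_nonneg_left hcvx (by positivity)
          _ = s ^ 2 := mul_one _
      have hstrict : s ^ 2 < a * f x + b * f y := by
        rw [← hα2, ← hβ2, hs]
        have h1 : α - β ≠ 0 := sub_ne_zero.2 hαβ
        have h2 : 0 < (α - β) ^ 2 := by positivity
        have key : a * α ^ 2 + b * β ^ 2 - (a * α + b * β) ^ 2 = a * b * (α - β) ^ 2 := by
          linear_combination (-(a * α ^ 2 + b * β ^ 2)) * hab
        have h3 : 0 < a * b * (α - β) ^ 2 := by positivity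
        linarith
      exact lt_of_le_of_lt hval hstrict
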